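/- Let A, B, C be categories, F, G : Aᵒᵖ × A ⥤ B and H, K : Bᵒᵖ × B ⥤ C functors, and φ : F → G, ψ : H → K dinatural transformations. Then the horizontal composition ψ ∗ φ is a dinatural transformation from H(Gᵒᵖ, F) to K(Fᵒᵖ, G): for every morphism f : A → B of A, K(F(f, 1_A), G(1_A, f)) ∘ (ψ ∗ φ)_A ∘ H(G(1_A, f), F(f, 1_A)) = K(F(1_B, f), G(f, 1_B)) ∘ (ψ ∗ φ)_B ∘ H(G(f, 1_B), F(1_B, f)), an equality of morphisms H(G(A,B), F(B,A)) → K(F(B,A), G(A,B)). -/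

import Mathlib

open CategoryTheory Opposite

universe v₁ u₁ v₂ u₂ v₃ u₃

variable {A : Type u₁} [Category.{v₁} A] {B : Type u₂} [Category.{v₂} B]
  {C : Type u₃} [Category.{v₃} C]

/-- Dinaturality of a family `φ_X : F (X, X) ⟶ G (X, X)`,
for `F G : Aᵒᵖ × A ⥤ B`. -/
def IsDinatural {F G : Aᵒᵖ × A ⥤ B} (φ : ∀ X : A, F.obj (op X, X) ⟶ G.obj (op X, X)) :
    Prop :=
  ∀ {X Y : A} (f : X ⟶ Y),
    F.map ((f.op, 𝟙 X) : (op Y, X) ⟶ (op X, X)) ≫ φ X ≫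
        G.map ((𝟙 (op X), f) : (op X, X) ⟶ (op X, Y)) =
      F.map ((𝟙 (op Y), f) : (op Y, X) ⟶ (op Y, Y)) ≫ φ Y ≫
        G.map ((f.op, 𝟙 Y) : (op Y, Y) ⟶ (op X, Y))

/-- The horizontal composition `ψ ∗ φ` of two (dinatural) families, defined as
`K(1, φ_X) ∘ ψ_{F(X,X)} ∘ H(φ_X, 1)`. -/
def hcApp {F G : Aᵒᵖ × A ⥤ B} {H K : Bᵒᵖ × B ⥤ C}
    (ψ : ∀ Z : B, H.obj (op Z, Z) ⟶ K.obj (op Z, Z))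
    (φ : ∀ X : A, F.obj (op X, X) ⟶ G.obj (op X, X)) (X : A) :
    H.obj (op (G.obj (op X, X)), F.obj (op X, X)) ⟶
      K.obj (op (F.obj (op X, X)), G.obj (op X, X)) :=
  H.map (((φ X).op, 𝟙 (F.obj (op X, X))) :
      (op (G.obj (op X, X)), F.obj (op X, X)) ⟶ (op (F.obj (op X, X)), F.obj (op X, X))) ≫
    ψ (F.obj (op X, X)) ≫
    K.map ((𝟙 (op (F.obj (op X, X))), φ X) :
      (op (F.obj (op X, X)), F.obj (op X, X)) ⟶ (op (F.obj (op X, X)), G.obj (op X, X)))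

/-- Dinaturality, in its single variable, of the horizontal composition of two families:
the hexagon between the composite functors `H(Gᵒᵖ, F)` and `K(Fᵒᵖ, G)`. -/
def HCIsDinatural {F G : Aᵒᵖ × A ⥤ B} {H K : Bᵒᵖ × B ⥤ C}
    (ψ : ∀ Z : B, H.obj (op Z, Z) ⟶ K.obj (op Z, Z))
    (φ : ∀ X : A, F.obj (op X, X) ⟶ G.obj (op X, X)) : Prop :=
  ∀ {X Y : A} (f : X ⟶ Y),
    H.map (((G.map ((𝟙 (op X), f) : (op X, X) ⟶ (op X, Y))).op,
        F.map ((f.op, 𝟙 X) : (op Y, X) ⟶ (op X, X))) :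
        (op (G.obj (op X, Y)), F.obj (op Y, X)) ⟶ (op (G.obj (op X, X)), F.obj (op X, X))) ≫
      hcApp ψ φ X ≫
      K.map (((F.map ((f.op, 𝟙 X) : (op Y, X) ⟶ (op X, X))).op,
        G.map ((𝟙 (op X), f) : (op X, X) ⟶ (op X, Y))) :
        (op (F.obj (op X, X)), G.obj (op X, X)) ⟶ (op (F.obj (op Y, X)), G.obj (op X, Y))) =
    H.map (((G.map ((f.op, 𝟙 Y) : (op Y, Y) ⟶ (op X, Y))).op,
        F.map ((𝟙 (op Y), f) : (op Y, X) ⟶ (op Y, Y))) :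
        (op (G.obj (op X, Y)), F.obj (op Y, X)) ⟶ (op (G.obj (op Y, Y)), F.obj (op Y, Y))) ≫
      hcApp ψ φ Y ≫
      K.map (((F.map ((𝟙 (op Y), f) : (op Y, X) ⟶ (op Y, Y))).op,
        G.map ((f.op, 𝟙 Y) : (op Y, Y) ⟶ (op X, Y))) :
        (op (F.obj (op Y, Y)), G.obj (op Y, Y)) ⟶ (op (F.obj (op Y, X)), G.obj (op X, Y)))


lemma hc_key {H K : Bᵒᵖ × B ⥤ C}
    (ψ : ∀ Z : B, H.obj (op Z, Z) ⟶ K.obj (op Z, Z)) (hψ : IsDinatural ψ)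
    {N Z M : B} (p : N ⟶ Z) (q : Z ⟶ M) :
    H.map ((q.op, p) : (op M, N) ⟶ (op Z, Z)) ≫ ψ Z ≫
        K.map ((p.op, q) : (op Z, Z) ⟶ (op N, M)) =
      H.map (((p ≫ q).op, 𝟙 N) : (op M, N) ⟶ (op N, N)) ≫ ψ N ≫
        K.map ((𝟙 (op N), p ≫ q) : (op N, N) ⟶ (op N, M)) := by
  have h := hψ p
  have e1 : H.map ((q.op, p) : (op M, N) ⟶ (op Z, Z)) =
      H.map ((q.op, 𝟙 N) : (op M, N) ⟶ (op Z, N)) ≫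
        H.map ((𝟙 (op Z), p) : (op Z, N) ⟶ (op Z, Z)) := by
    rw [← Functor.map_comp]; simp [prod_comp]
  have e2 : K.map ((p.op, q) : (op Z, Z) ⟶ (op N, M)) =
      K.map ((p.op, 𝟙 Z) : (op Z, Z) ⟶ (op N, Z)) ≫
        K.map ((𝟙 (op N), q) : (op N, Z) ⟶ (op N, M)) := by
    rw [← Functor.map_comp]; simp [prod_comp]
  have e3 : H.map (((p ≫ q).op, 𝟙 N) : (op M, N) ⟶ (op N, N)) =
      H.map ((q.op, 𝟙 N) : (op M, N) ⟶ (op Z, N)) ≫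
        H.map ((p.op, 𝟙 N) : (op Z, N) ⟶ (op N, N)) := by
    rw [← Functor.map_comp]; congr 1; simp [prod_comp]
  have e4 : K.map ((𝟙 (op N), p ≫ q) : (op N, N) ⟶ (op N, M)) =
      K.map ((𝟙 (op N), p) : (op N, N) ⟶ (op N, Z)) ≫
        K.map ((𝟙 (op N), q) : (op N, Z) ⟶ (op N, M)) := by
    rw [← Functor.map_comp]; congr 1; simp [prod_comp]
  rw [e1, e2, e3, e4]
  slice_lhs 2 4 => rw [← h]
  simp

theorem stmt9 {F G : Aᵒᵖ × A ⥤ B} {H K : Bᵒᵖ × B ⥤ C}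
    (φ : ∀ X : A, F.obj (op X, X) ⟶ G.obj (op X, X))
    (ψ : ∀ Z : B, H.obj (op Z, Z) ⟶ K.obj (op Z, Z))
    (hφ : IsDinatural φ) (hψ : IsDinatural ψ) :
    HCIsDinatural ψ φ := by
  intro X Y f
  have lhs_eq :
      H.map (((G.map ((𝟙 (op X), f) : (op X, X) ⟶ (op X, Y))).op,
          F.map ((f.op, 𝟙 X) : (op Y, X) ⟶ (op X, X)))) ≫
        hcApp ψ φ X ≫
        K.map (((F.map ((f.op, 𝟙 X) : (op Y, X) ⟶ (op X, X))).op,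
          G.map ((𝟙 (op X), f) : (op X, X) ⟶ (op X, Y)))) =
      H.map ((((φ X ≫ G.map ((𝟙 (op X), f) : (op X, X) ⟶ (op X, Y))).op,
          F.map ((f.op, 𝟙 X) : (op Y, X) ⟶ (op X, X))) :
          (op (G.obj (op X, Y)), F.obj (op Y, X)) ⟶
            (op (F.obj (op X, X)), F.obj (op X, X)))) ≫
        ψ (F.obj (op X, X)) ≫
        K.map ((((F.map ((f.op, 𝟙 X) : (op Y, X) ⟶ (op X, X))).op,
          φ X ≫ G.map ((𝟙 (op X), f) : (op X, X) ⟶ (op X, Y))) :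
          (op (F.obj (op X, X)), F.obj (op X, X)) ⟶
            (op (F.obj (op Y, X)), G.obj (op X, Y)))) := by
    unfold hcApp
    simp only [Category.assoc]
    rw [← Functor.map_comp_assoc, ← Functor.map_comp]
    simp [prod_comp]
  have rhs_eq :
      H.map (((G.map ((f.op, 𝟙 Y) : (op Y, Y) ⟶ (op X, Y))).op,
          F.map ((𝟙 (op Y), f) : (op Y, X) ⟶ (op Y, Y)))) ≫
        hcApp ψ φ Y ≫
        K.map (((F.map ((𝟙 (op Y), f) : (op Y, X) ⟶ (op Y, Y))).op,
          G.map ((f.op, 𝟙 Y) : (op Y, Y) ⟶ (op X, Y)))) =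
      H.map ((((φ Y ≫ G.map ((f.op, 𝟙 Y) : (op Y, Y) ⟶ (op X, Y))).op,
          F.map ((𝟙 (op Y), f) : (op Y, X) ⟶ (op Y, Y))) :
          (op (G.obj (op X, Y)), F.obj (op Y, X)) ⟶
            (op (F.obj (op Y, Y)), F.obj (op Y, Y)))) ≫
        ψ (F.obj (op Y, Y)) ≫
        K.map ((((F.map ((𝟙 (op Y), f) : (op Y, X) ⟶ (op Y, Y))).op,
          φ Y ≫ G.map ((f.op, 𝟙 Y) : (op Y, Y) ⟶ (op X, Y))) :
          (op (F.obj (op Y, Y)), F.obj (op Y, Y)) ⟶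
            (op (F.obj (op Y, X)), G.obj (op X, Y)))) := by
    unfold hcApp
    simp only [Category.assoc]
    rw [← Functor.map_comp_assoc, ← Functor.map_comp]
    simp [prod_comp]
  rw [lhs_eq, rhs_eq,
    hc_key ψ hψ (F.map ((f.op, 𝟙 X) : (op Y, X) ⟶ (op X, X)))
      (φ X ≫ G.map ((𝟙 (op X), f) : (op X, X) ⟶ (op X, Y))),
    hc_key ψ hψ (F.map ((𝟙 (op Y), f) : (op Y, X) ⟶ (op Y, Y)))
      (φ Y ≫ G.map ((f.op, 𝟙 Y) : (op Y, Y) ⟶ (op X, Y)))]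
  rw [hφ f]
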